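/- Let b : ℝ → ℝ be continuous with b(y) ≥ 0 for all y ∈ [0,1) and b(y) ≤ 0 for all y ∈ (−1,0]. Let L : [0,∞) → ℝ be càdlàg with L(0) = 0, let ε > 0 and x ∈ (−1,1), and let X : [0,∞) → ℝ be a càdlàg solution of the pathwise equation X_t = x − ∫_0^t b(X_s) ds + ε·L_t for all t ≥ 0. If T ≥ 0 is such that |X_t| < 1 for all t ∈ [0,T), then |X_T| ≤ |x| + sup_{t∈[0,T]} ε·L_t − inf_{t∈[0,T]} ε·L_t. -/

import Mathlib

open Filter

/-- A real function on `[0,∞)` (modeled as a function on `ℝ`, constrained only on `[0,∞)`)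
is càdlàg: right-continuous at every `t ≥ 0` and with left limits at every `t > 0`. -/
def IsCadlag (f : ℝ → ℝ) : Prop :=
  (∀ t ≥ (0 : ℝ), ContinuousWithinAt f (Set.Ici t) t) ∧
  (∀ t > (0 : ℝ), ∃ c : ℝ, Tendsto f (nhdsWithin t (Set.Iio t)) (nhds c))

open MeasureTheory Set in
lemma ae_ne_vol (a : ℝ) : ∀ᵐ s : ℝ, s ≠ a := by
  rw [MeasureTheory.ae_iff]
  have : {x : ℝ | ¬ x ≠ a} = {a} := by ext y; simp
  rw [this]
  exact measure_singleton a

lemma IsCadlag.neg {f : ℝ → ℝ} (h : IsCadlag f) : IsCadlag (fun t => -f t) :=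
  ⟨fun t ht => (h.1 t ht).neg, fun t ht => by
    obtain ⟨c, hc⟩ := h.2 t ht
    exact ⟨-c, hc.neg⟩⟩

/-- A right-continuous function on `[0,∞)` agrees there with a measurable function. -/
lemma rightCont_measurable (f : ℝ → ℝ)
    (hf : ∀ t ≥ (0 : ℝ), ContinuousWithinAt f (Set.Ici t) t) :
    ∃ g : ℝ → ℝ, Measurable g ∧ ∀ t ≥ (0 : ℝ), g t = f t := by
  set g : ℝ → ℝ := fun t => f (max t 0) with hg
  refine ⟨g, ?_, fun t ht => by simp [hg, max_eq_left ht]⟩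
  have hgc : ∀ t : ℝ, ContinuousWithinAt g (Set.Ici t) t := by
    intro t
    rcases le_or_gt 0 t with ht | ht
    · have h1 : ContinuousWithinAt (fun s : ℝ => max s 0) (Set.Ici t) t :=
        (continuous_id.max continuous_const).continuousWithinAt
      have h2 : ContinuousWithinAt f (Set.Ici t) (max t 0) := by
        rw [max_eq_left ht]; exact hf t ht
      refine ContinuousWithinAt.comp (f := fun s : ℝ => max s 0) (g := f)
        (s := Set.Ici t) (t := Set.Ici t) h2 h1 ?_
      intro s hs
      exact le_trans hs (le_max_left s 0)
    · have he : g =ᶠ[nhds t] fun _ => f 0 := by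
        filter_upwards [isOpen_Iio.mem_nhds (show t ∈ Set.Iio 0 from ht)] with s hs
        have hs' : s < 0 := hs
        simp [hg, max_eq_right hs'.le]
      exact (continuousAt_const.congr he.symm).continuousWithinAt
  -- approximate from the right by dyadic step functions
  set u : ℕ → ℝ → ℝ := fun n t => (⌈t * 2 ^ n⌉ : ℝ) / 2 ^ n with hu
  have humeas : ∀ n, Measurable fun t => g (u n t) := by
    intro n
    have : (fun t => g (u n t))
        = (fun k : ℤ => g ((k : ℝ) / 2 ^ n)) ∘ fun t : ℝ => ⌈t * 2 ^ n⌉ := rfl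
    rw [this]
    exact (measurable_of_countable _).comp
      (Int.measurable_ceil.comp (measurable_id.mul_const _))
  have hlim : ∀ t, Tendsto (fun n => g (u n t)) atTop (nhds (g t)) := by
    intro t
    have h1 : ∀ n, t ≤ u n t := by
      intro n
      rw [hu]
      dsimp only
      rw [le_div_iff₀ (by positivity)]
      exact Int.le_ceil _
    have h2 : ∀ n : ℕ, u n t ≤ t + ((2 : ℝ) ^ n)⁻¹ := by
      intro n
      rw [hu]
      dsimp only
      rw [div_le_iff₀ (by positivity)]
      have h3 := (Int.ceil_lt_add_one (t * 2 ^ n)).le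
      have h4 : (t + ((2 : ℝ) ^ n)⁻¹) * 2 ^ n = t * 2 ^ n + 1 := by
        field_simp
      linarith
    have htend : Tendsto (fun n => u n t) atTop (nhds t) := by
      have haux : Tendsto (fun n : ℕ => t + ((2 : ℝ) ^ n)⁻¹) atTop (nhds (t + 0)) :=
        tendsto_const_nhds.add
          ((tendsto_pow_atTop_atTop_of_one_lt (by norm_num : (1:ℝ) < 2)).inv_tendsto_atTop)
      refine tendsto_of_tendsto_of_tendsto_of_le_of_le tendsto_const_nhds ?_ h1 h2
      simpa using haux
    have htend' : Tendsto (fun n => u n t) atTop (nhdsWithin t (Set.Ici t)) :=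
      tendsto_nhdsWithin_of_tendsto_nhds_of_eventually_within _ htend
        (Eventually.of_forall h1)
    exact ((hgc t).tendsto).comp htend'
  exact measurable_of_tendsto_metrizable humeas (tendsto_pi_nhds.2 hlim)

open MeasureTheory intervalIntegral in
/-- Boundedness of `ε·L` on `[0,T]`, read off from the equation. -/
lemma eL_bdd (b : ℝ → ℝ) (hb : Continuous b)
    (L : ℝ → ℝ) (ε : ℝ) (x : ℝ) (X : ℝ → ℝ)
    (hXeq : ∀ t ≥ (0 : ℝ), X t = x - (∫ s in (0 : ℝ)..t, b (X s)) + ε * L t)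
    (T : ℝ) (hT : 0 ≤ T) (hbound : ∀ t ∈ Set.Ico (0 : ℝ) T, |X t| < 1) :
    ∃ C : ℝ, ∀ t ∈ Set.Icc (0 : ℝ) T, |ε * L t| ≤ C := by
  obtain ⟨M, hM⟩ := (isCompact_Icc (a := (-1:ℝ)) (b := 1)).exists_bound_of_continuousOn
    hb.continuousOn
  set M' : ℝ := max M 0 with hM'
  have hM'0 : 0 ≤ M' := le_max_right _ _
  refine ⟨1 + |x| + M' * T + |ε * L T|, ?_⟩
  intro t ht
  rcases eq_or_lt_of_le ht.2 with rfl | htT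
  · have h0 : (0:ℝ) ≤ 1 + |x| + M' * t := by
      have := mul_nonneg hM'0 ht.1
      have := abs_nonneg x
      linarith
    linarith
  · have hFt : |∫ s in (0:ℝ)..t, b (X s)| ≤ M' * T := by
      have h1 : ∀ s ∈ Set.uIoc (0:ℝ) t, ‖b (X s)‖ ≤ M' := by
        intro s hs
        rw [Set.uIoc_of_le ht.1] at hs
        have hX1 : |X s| < 1 := hbound s ⟨hs.1.le, lt_of_le_of_lt hs.2 htT⟩
        have := hM (X s) ⟨by linarith [(abs_lt.1 hX1).1], by linarith [(abs_lt.1 hX1).2]⟩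
        exact le_trans this (le_max_left _ _)
      have h2 := intervalIntegral.norm_integral_le_of_norm_le_const h1
      rw [Real.norm_eq_abs] at h2
      have : M' * |t - 0| ≤ M' * T := by
        rw [sub_zero, abs_of_nonneg ht.1]
        exact mul_le_mul_of_nonneg_left ht.2 hM'0
      linarith
    have heq := hXeq t ht.1
    have : |ε * L t| ≤ |X t| + |x| + |∫ s in (0:ℝ)..t, b (X s)| := by
      have : ε * L t = X t - x + (∫ s in (0:ℝ)..t, b (X s)) := by linarith
      rw [this]
      have habs : |X t - x| ≤ |X t| + |x| := by
        calc |X t - x| = |X t + -x| := by ring_nf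
          _ ≤ |X t| + |-x| := abs_add_le _ _
          _ = |X t| + |x| := by rw [abs_neg]
      calc |X t - x + ∫ s in (0:ℝ)..t, b (X s)|
          ≤ |X t - x| + |∫ s in (0:ℝ)..t, b (X s)| := abs_add_le _ _
        _ ≤ |X t| + |x| + |∫ s in (0:ℝ)..t, b (X s)| := by linarith
    have hX1 : |X t| < 1 := hbound t ⟨ht.1, htT⟩
    have : |ε * L t| ≤ 1 + |x| + M' * T := by linarith
    linarith [abs_nonneg (ε * L T)]

open MeasureTheory intervalIntegral Set in
/-- One-sided estimate. -/
lemma exit_upper (b : ℝ → ℝ) (hb : Continuous b)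
    (hb1 : ∀ y ∈ Set.Ico (0 : ℝ) 1, 0 ≤ b y)
    (L : ℝ → ℝ) (hL0 : L 0 = 0)
    (ε : ℝ) (x : ℝ)
    (X : ℝ → ℝ) (hX : IsCadlag X)
    (hXeq : ∀ t ≥ (0 : ℝ), X t = x - (∫ s in (0 : ℝ)..t, b (X s)) + ε * L t)
    (T : ℝ) (hT : 0 ≤ T) (hbound : ∀ t ∈ Set.Ico (0 : ℝ) T, |X t| < 1) :
    X T ≤ |x| + sSup ((fun t => ε * L t) '' Set.Icc 0 T)
      - sInf ((fun t => ε * L t) '' Set.Icc 0 T) := by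
  classical
  -- a measurable version of X on [0,∞)
  obtain ⟨X', hX'm, hX'eq⟩ := rightCont_measurable X hX.1
  obtain ⟨M, hM⟩ := (isCompact_Icc (a := (-1:ℝ)) (b := 1)).exists_bound_of_continuousOn
    hb.continuousOn
  set M' : ℝ := max M 0 with hM'def
  -- integrability of the drift term on [0,T]
  have hint : IntegrableOn (fun s => b (X s)) (Set.Icc 0 T) volume := by
    have hg : IntegrableOn (fun s => b (X' s)) (Set.Icc 0 T) volume := by
      apply Measure.integrableOn_of_bounded (M := M')
      · rw [Real.volume_Icc]; exact ENNReal.ofReal_ne_top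
      · exact (hb.measurable.comp hX'm).aestronglyMeasurable
      · rw [ae_restrict_iff' measurableSet_Icc]
        filter_upwards [ae_ne_vol T] with s hs hsIcc
        have hsT : s < T := lt_of_le_of_ne hsIcc.2 hs
        have hX1 := abs_lt.1 (hbound s ⟨hsIcc.1, hsT⟩)
        rw [hX'eq s hsIcc.1]
        exact le_trans (hM (X s) ⟨by linarith [hX1.1], by linarith [hX1.2]⟩)
          (le_max_left _ _)
    exact hg.congr_fun (fun s hs => by dsimp only; rw [hX'eq s hs.1]) measurableSet_Icc
  have hii : ∀ a c : ℝ, a ∈ Set.Icc (0:ℝ) T → c ∈ Set.Icc (0:ℝ) T →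
      IntervalIntegrable (fun s => b (X s)) volume a c := fun a c ha hc =>
    (hint.mono_set (Set.uIcc_subset_Icc ha hc)).intervalIntegrable
  set F : ℝ → ℝ := fun t => ∫ s in (0:ℝ)..t, b (X s) with hFdef
  have hXeqF : ∀ t ≥ (0:ℝ), X t = x - F t + ε * L t := hXeq
  have hFcont : ContinuousOn F (Set.Icc 0 T) := by
    have h0 := intervalIntegral.continuousOn_primitive_interval (a := (0:ℝ)) (b := T)
      (μ := volume) (f := fun s => b (X s)) (by rwa [Set.uIcc_of_le hT])
    rwa [Set.uIcc_of_le hT] at h0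
  -- bounds for ε·L on [0,T]
  obtain ⟨C, hC⟩ := eL_bdd b hb L ε x X hXeq T hT hbound
  have hBddA : BddAbove ((fun t => ε * L t) '' Set.Icc 0 T) := by
    refine ⟨C, ?_⟩
    rintro y ⟨t, ht, rfl⟩
    exact le_trans (le_abs_self _) (hC t ht)
  have hBddB : BddBelow ((fun t => ε * L t) '' Set.Icc 0 T) := by
    refine ⟨-C, ?_⟩
    rintro y ⟨t, ht, rfl⟩
    exact neg_le_of_neg_le (le_trans (neg_le_abs _) (hC t ht))
  have hSgeT : ε * L T ≤ sSup ((fun t => ε * L t) '' Set.Icc 0 T) :=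
    le_csSup hBddA (Set.mem_image_of_mem _ ⟨hT, le_rfl⟩)
  have hIle : ∀ t ∈ Set.Icc (0:ℝ) T, sInf ((fun t => ε * L t) '' Set.Icc 0 T) ≤ ε * L t :=
    fun t ht => csInf_le hBddB (Set.mem_image_of_mem _ ht)
  have hI0 : sInf ((fun t => ε * L t) '' Set.Icc 0 T) ≤ 0 := by
    have h0 := hIle 0 ⟨le_rfl, hT⟩
    simpa [hL0] using h0
  -- the last time X is negative
  set P : Set ℝ := {s | s ∈ Set.Ico (0:ℝ) T ∧ X s < 0} with hPdef
  set τ := sSup (insert 0 P) with hτdef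
  have hPbdd : BddAbove (insert (0:ℝ) P) := by
    refine ⟨T, ?_⟩
    rintro s (rfl | hs)
    · exact hT
    · exact hs.1.2.le
  have hτ0 : 0 ≤ τ := le_csSup hPbdd (Set.mem_insert 0 P)
  have hτT : τ ≤ T := csSup_le (Set.insert_nonempty 0 P)
    (by rintro s (rfl | hs); exacts [hT, hs.1.2.le])
  have hτIcc : τ ∈ Set.Icc (0:ℝ) T := ⟨hτ0, hτT⟩
  have hXTeq : X T = x - F T + ε * L T := hXeqF T hT
  rcases eq_or_lt_of_le hτ0 with hτe | hτpos
  · -- τ = 0 : X is nonnegative on (0,T)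
    have hpos : ∀ s ∈ Set.Ioo (0:ℝ) T, 0 ≤ X s := by
      intro s hs
      by_contra hneg
      push_neg at hneg
      have hmem : s ∈ insert (0:ℝ) P := Set.mem_insert_of_mem _ ⟨⟨hs.1.le, hs.2⟩, hneg⟩
      have h1 : s ≤ τ := le_csSup hPbdd hmem
      rw [← hτe] at h1
      linarith [hs.1]
    have hFnn : 0 ≤ F T := by
      refine intervalIntegral.integral_nonneg_of_ae_restrict hT ?_
      refine (ae_restrict_iff' measurableSet_Icc).2 ?_
      filter_upwards [(ae_ne_vol 0).and (ae_ne_vol T)] with s hs hsIcc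
      have hsIoo : s ∈ Set.Ioo (0:ℝ) T :=
        ⟨lt_of_le_of_ne hsIcc.1 (Ne.symm hs.1), lt_of_le_of_ne hsIcc.2 hs.2⟩
      simpa using hb1 _ ⟨hpos s hsIoo, (abs_lt.1 (hbound s ⟨hsIoo.1.le, hsIoo.2⟩)).2⟩
    linarith [le_abs_self x]
  · -- τ > 0 : use the left limit of X at τ
    obtain ⟨c, hc⟩ := hX.2 τ hτpos
    have happrox : ∀ δ > (0:ℝ), ∃ s, s ∈ P ∧ τ - δ < s ∧ s < τ := by
      intro δ hδ
      have hlt : τ - min δ τ < τ := by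
        have h0 : 0 < min δ τ := lt_min hδ hτpos
        linarith
      obtain ⟨s, hsmem, hslt⟩ := exists_lt_of_lt_csSup (Set.insert_nonempty 0 P) hlt
      rcases hsmem with rfl | hsP
      · exfalso
        have := min_le_right δ τ
        linarith
      · have hsle : s ≤ τ := le_csSup hPbdd (Set.mem_insert_of_mem _ hsP)
        rcases eq_or_lt_of_le hsle with hse | hslt2
        · -- τ ∈ P is impossible by right continuity
          exfalso
          have hXs : X s < 0 := hsP.2
          have hsT : s < T := hsP.1.2
          have hev1 : ∀ᶠ u in nhdsWithin s (Set.Ioi s), X u < 0 :=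
            ((hX.1 s hsP.1.1).tendsto.eventually_lt_const hXs).filter_mono
              (nhdsWithin_mono s Set.Ioi_subset_Ici_self)
          have hev2 : ∀ᶠ u in nhdsWithin s (Set.Ioi s), u ∈ Set.Iio T :=
            eventually_of_mem (mem_nhdsWithin_of_mem_nhds (isOpen_Iio.mem_nhds hsT))
              (fun _ h => h)
          have hev3 : ∀ᶠ u in nhdsWithin s (Set.Ioi s), u ∈ Set.Ioi s :=
            eventually_mem_nhdsWithin
          obtain ⟨u, ⟨hu1, hu2⟩, hu3⟩ := ((hev1.and hev2).and hev3).exists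
          have huP : u ∈ insert (0:ℝ) P :=
            Set.mem_insert_of_mem _ ⟨⟨le_trans hsP.1.1 (le_of_lt hu3), hu2⟩, hu1⟩
          have h1 : u ≤ τ := le_csSup hPbdd huP
          rw [← hse] at h1
          exact absurd h1 (not_le.2 hu3)
        · exact ⟨s, hsP, by linarith [min_le_left δ τ], hslt2⟩
    have hcle : c ≤ 0 := by
      by_contra hpos0
      push_neg at hpos0
      have hev : ∀ᶠ u in nhdsWithin τ (Set.Iio τ), 0 < X u := hc.eventually_const_lt hpos0
      have hev' : {u : ℝ | 0 < X u} ∈ nhdsWithin τ (Set.Iio τ) := hev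
      obtain ⟨l, hl, hsub⟩ := mem_nhdsLT_iff_exists_Ioo_subset.1 hev'
      have hlτ : l < τ := hl
      obtain ⟨s, hsP, hs1, hs2⟩ := happrox (τ - l) (by linarith)
      have h0 : 0 < X s := hsub ⟨by linarith, hs2⟩
      linarith [hsP.2]
    have hIooτ : Set.Ioo (0:ℝ) τ ∈ nhdsWithin τ (Set.Iio τ) :=
      Ioo_mem_nhdsLT_of_mem ⟨hτpos, le_rfl⟩
    have hFτ : Tendsto F (nhdsWithin τ (Set.Iio τ)) (nhds (F τ)) := by
      have h1 : nhdsWithin τ (Set.Iio τ) ≤ nhdsWithin τ (Set.Ioo 0 τ) :=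
        nhdsWithin_le_of_mem hIooτ
      have h2 : nhdsWithin τ (Set.Ioo 0 τ) ≤ nhdsWithin τ (Set.Icc 0 T) :=
        nhdsWithin_mono τ (fun s hs => ⟨hs.1.le, hs.2.le.trans hτT⟩)
      exact ((hFcont τ hτIcc).tendsto).mono_left (h1.trans h2)
    have hLlim : Tendsto (fun s => ε * L s) (nhdsWithin τ (Set.Iio τ))
        (nhds (c - x + F τ)) := by
      have hkey : (fun s => X s - x + F s) =ᶠ[nhdsWithin τ (Set.Iio τ)]
          (fun s => ε * L s) := by
        filter_upwards [hIooτ] with s hs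
        have h0 := hXeqF s hs.1.le
        linarith
      exact Tendsto.congr' hkey ((hc.sub_const x).add hFτ)
    have hLlimI : sInf ((fun t => ε * L t) '' Set.Icc 0 T) ≤ c - x + F τ := by
      refine ge_of_tendsto hLlim ?_
      filter_upwards [hIooτ] with s hs
      exact hIle s ⟨hs.1.le, hs.2.le.trans hτT⟩
    have hJ : 0 ≤ ∫ s in τ..T, b (X s) := by
      refine intervalIntegral.integral_nonneg_of_ae_restrict hτT ?_
      refine (ae_restrict_iff' measurableSet_Icc).2 ?_
      filter_upwards [(ae_ne_vol τ).and (ae_ne_vol T)] with s hs hsIcc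
      have hsIoo : s ∈ Set.Ioo τ T :=
        ⟨lt_of_le_of_ne hsIcc.1 (Ne.symm hs.1), lt_of_le_of_ne hsIcc.2 hs.2⟩
      have hs0 : 0 < s := lt_trans hτpos hsIoo.1
      have hXs : 0 ≤ X s := by
        by_contra hneg
        push_neg at hneg
        have hmem : s ∈ insert (0:ℝ) P :=
          Set.mem_insert_of_mem _ ⟨⟨hs0.le, hsIoo.2⟩, hneg⟩
        have h1 : s ≤ τ := le_csSup hPbdd hmem
        linarith [hsIoo.1]
      simpa using hb1 _ ⟨hXs, (abs_lt.1 (hbound s ⟨hs0.le, hsIoo.2⟩)).2⟩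
    have hsplit : F T = F τ + ∫ s in τ..T, b (X s) :=
      (intervalIntegral.integral_add_adjacent_intervals
        (hii 0 τ ⟨le_rfl, hT⟩ hτIcc) (hii τ T hτIcc ⟨hT, le_rfl⟩)).symm
    linarith [abs_nonneg x]

theorem exit_start_estimate (b : ℝ → ℝ) (hb : Continuous b)
    (hb1 : ∀ y ∈ Set.Ico (0 : ℝ) 1, 0 ≤ b y)
    (hb2 : ∀ y ∈ Set.Ioc (-1 : ℝ) 0, b y ≤ 0)
    (L : ℝ → ℝ) (hL : IsCadlag L) (hL0 : L 0 = 0)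
    (ε : ℝ) (hε : 0 < ε) (x : ℝ) (hx : x ∈ Set.Ioo (-1 : ℝ) 1)
    (X : ℝ → ℝ) (hX : IsCadlag X)
    (hXeq : ∀ t ≥ (0 : ℝ), X t = x - (∫ s in (0 : ℝ)..t, b (X s)) + ε * L t)
    (T : ℝ) (hT : 0 ≤ T) (hbound : ∀ t ∈ Set.Ico (0 : ℝ) T, |X t| < 1) :
    |X T| ≤ |x| + sSup ((fun t => ε * L t) '' Set.Icc 0 T)
      - sInf ((fun t => ε * L t) '' Set.Icc 0 T) := by
  have h1 := exit_upper b hb hb1 L hL0 ε x X hX hXeq T hT hbound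
  -- the reflected data
  have hb1' : ∀ y ∈ Set.Ico (0:ℝ) 1, 0 ≤ -b (-y) := by
    intro y hy
    have := hb2 (-y) ⟨by linarith [hy.2], by linarith [hy.1]⟩
    linarith
  have hXeq' : ∀ t ≥ (0:ℝ), -X t = -x - (∫ s in (0:ℝ)..t, -b (-(-X s))) + ε * (-L t) := by
    intro t ht
    have h0 := hXeq t ht
    have h2 : (∫ s in (0:ℝ)..t, -b (-(-X s))) = -∫ s in (0:ℝ)..t, b (X s) := by
      simp [intervalIntegral.integral_neg]
    rw [h2]; linarith
  have h2 := exit_upper (fun y => -b (-y)) ((hb.comp continuous_neg).neg) hb1'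
    (fun t => -L t) (by simp [hL0]) ε (-x) (fun t => -X t) hX.neg hXeq' T hT
    (by intro t ht; simpa using hbound t ht)
  -- rewrite sSup/sInf of the negated image
  obtain ⟨C, hC⟩ := eL_bdd b hb L ε x X hXeq T hT hbound
  have hne : ((fun t => ε * L t) '' Set.Icc 0 T).Nonempty :=
    ⟨ε * L 0, Set.mem_image_of_mem _ ⟨le_rfl, hT⟩⟩
  have hBddA : BddAbove ((fun t => ε * L t) '' Set.Icc 0 T) := by
    refine ⟨C, ?_⟩
    rintro y ⟨t, ht, rfl⟩
    exact le_trans (le_abs_self _) (hC t ht)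
  have hBddB : BddBelow ((fun t => ε * L t) '' Set.Icc 0 T) := by
    refine ⟨-C, ?_⟩
    rintro y ⟨t, ht, rfl⟩
    exact neg_le_of_neg_le (le_trans (neg_le_abs _) (hC t ht))
  have himg : (fun t => ε * -L t) '' Set.Icc 0 T = -((fun t => ε * L t) '' Set.Icc 0 T) := by
    rw [← Set.image_neg_eq_neg, ← Set.image_comp]
    apply Set.image_congr'
    intro t; simp [Function.comp, mul_neg]
  rw [himg, csSup_neg hne hBddB, csInf_neg hne hBddA, abs_neg] at h2
  have h2' : -X T ≤ |x| + -sInf ((fun t => ε * L t) '' Set.Icc 0 T)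
      - -sSup ((fun t => ε * L t) '' Set.Icc 0 T) := h2
  rw [abs_le]
  constructor
  · linarith
  · exact h1
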